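/- For a C² function φ on an open subset of ℂⁿ, a point z, and a unit vector T ∈ ℂⁿ, the limit as r → 0⁺ of r^{-2} · [(1/2π)∫₀^{2π} φ(z + re^{iθ}T) dθ − φ(z)] equals the complex Hessian quadratic form Σ_{j,k} (∂²φ/∂z_j∂z̄_k)(z) T_j T̄_k. -/

import Mathlib

open MeasureTheory Metric Set Real Filter Topology

noncomputable section

instance {ι : Type*} : MeasurableSpace (EuclideanSpace ℂ ι) :=
  MeasurableSpace.comap WithLp.ofLp MeasurableSpace.pi

instance {ι : Type*} [Finite ι] : BorelSpace (EuclideanSpace ℂ ι) :=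
  PiLp.borelSpace 2 (X := fun _ : ι => ℂ)

instance {ι : Type*} [Fintype ι] : MeasureSpace (EuclideanSpace ℂ ι) :=
  ⟨(volume : Measure (ι → ℂ)).map (WithLp.toLp 2)⟩

/-- The circular mean of `u` over the circle of radius `r` around `a`
in the complex direction `T`. -/
def circMean {n : ℕ} (u : EuclideanSpace ℂ (Fin n) → ℝ)
    (a T : EuclideanSpace ℂ (Fin n)) (r : ℝ) : ℝ :=
  (1 / (2 * π)) * ∫ θ in (0:ℝ)..(2 * π),
    u (a + ((r : ℂ) * Complex.exp ((θ : ℂ) * Complex.I)) • T)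

/-- `u` is plurisubharmonic on `s` : upper semicontinuous and satisfying the
sub-mean value inequality over small circles in every complex direction. -/
def PshOn {n : ℕ} (u : EuclideanSpace ℂ (Fin n) → ℝ)
    (s : Set (EuclideanSpace ℂ (Fin n))) : Prop :=
  UpperSemicontinuousOn u s ∧
    ∀ a ∈ s, ∀ T : EuclideanSpace ℂ (Fin n), ‖T‖ = 1 →
      ∀ᶠ r in 𝓝[>] (0:ℝ), u a ≤ circMean u a T r

/-- The mean of `u` over the Euclidean sphere of radius `r` around `a`. -/
def sphMean {n : ℕ} (u : EuclideanSpace ℂ (Fin n) → ℝ)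
    (a : EuclideanSpace ℂ (Fin n)) (r : ℝ) : ℝ :=
  ⨍ ξ : sphere (0 : EuclideanSpace ℂ (Fin n)) 1,
    u (a + r • (ξ : EuclideanSpace ℂ (Fin n)))
      ∂((volume : Measure (EuclideanSpace ℂ (Fin n))).toSphere)

/-- `u` is subharmonic on `s` : upper semicontinuous, locally integrable and
satisfying the sub-mean value inequality over small Euclidean spheres. -/
def SubhOn {n : ℕ} (u : EuclideanSpace ℂ (Fin n) → ℝ)
    (s : Set (EuclideanSpace ℂ (Fin n))) : Prop :=
  UpperSemicontinuousOn u s ∧ LocallyIntegrableOn u s volume ∧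
    ∀ a ∈ s, ∀ᶠ r in 𝓝[>] (0:ℝ), u a ≤ sphMean u a r

/-- The real Laplacian of `φ` at `x`, computed in the orthonormal real basis
`e_j`, `i•e_j` of `ℂⁿ`. -/
def lap {n : ℕ} (φ : EuclideanSpace ℂ (Fin n) → ℝ)
    (x : EuclideanSpace ℂ (Fin n)) : ℝ :=
  ∑ j : Fin n,
    (iteratedFDeriv ℝ 2 φ x
        ![EuclideanSpace.single j (1:ℂ), EuclideanSpace.single j (1:ℂ)] +
      iteratedFDeriv ℝ 2 φ x
        ![Complex.I • EuclideanSpace.single j (1:ℂ),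
          Complex.I • EuclideanSpace.single j (1:ℂ)])

/-- The complex Hessian quadratic form `Σ_{j,k} ∂²φ/∂z_j∂z̄_k (x) T_j T̄_k`,
expressed through the real second derivative as
`(1/4)(D²φ(x)[T,T] + D²φ(x)[iT,iT])`. -/
def cHess {n : ℕ} (φ : EuclideanSpace ℂ (Fin n) → ℝ)
    (x T : EuclideanSpace ℂ (Fin n)) : ℝ :=
  (1 / 4) * (iteratedFDeriv ℝ 2 φ x ![T, T] +
    iteratedFDeriv ℝ 2 φ x ![Complex.I • T, Complex.I • T])

theorem taylor2' {E : Type*} [NormedAddCommGroup E] [NormedSpace ℝ E]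
    {φ : E → ℝ} {U : Set E} (hU : IsOpen U) {z : E} (hz : z ∈ U)
    (hφ : ContDiffOn ℝ 2 φ U) :
    (fun v => φ (z + v) - φ z - fderiv ℝ φ z v
      - (1/2) * (fderiv ℝ (fderiv ℝ φ) z v v)) =o[𝓝 (0:E)] (fun v => ‖v‖ ^ 2) := by
  set L := fderiv ℝ φ z with hLdef
  set B := fderiv ℝ (fderiv ℝ φ) z with hBdef
  have hdiff : ∀ y ∈ U, HasFDerivAt φ (fderiv ℝ φ y) y := fun y hy =>
    ((hφ.contDiffAt (hU.mem_nhds hy)).differentiableAt two_ne_zero).hasFDerivAt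
  have hf1 : ContDiffOn ℝ 1 (fderiv ℝ φ) U := by
    have := ((contDiffOn_succ_iff_fderiv_of_isOpen (n := 1) hU).1 (by exact_mod_cast hφ))
    exact this.2.2
  have hB : HasFDerivAt (fderiv ℝ φ) B z :=
    ((hf1.contDiffAt (hU.mem_nhds hz)).differentiableAt one_ne_zero).hasFDerivAt
  have hsymm : ∀ v w, B v w = B w v :=
    second_derivative_symmetric_of_eventually_of_real
      (Filter.eventually_of_mem (hU.mem_nhds hz) hdiff) hB
  have hq : ∀ u : E, HasFDerivAt (fun w => (1/2 : ℝ) * (B w w)) (B u) u := by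
    intro u
    have h1 : HasFDerivAt (fun w : E => B w w)
        ((B u).comp (ContinuousLinearMap.id ℝ E) + B.flip u) u :=
      B.hasFDerivAt.clm_apply (hasFDerivAt_id u)
    have h2 := h1.const_mul (1/2 : ℝ)
    refine h2.congr_fderiv ?_
    ext w
    have := hsymm w u
    simp only [ContinuousLinearMap.smul_apply, ContinuousLinearMap.add_apply,
      ContinuousLinearMap.comp_apply, ContinuousLinearMap.coe_id', id_eq,
      ContinuousLinearMap.flip_apply, smul_eq_mul]
    rw [this]; ring
  rw [Asymptotics.isLittleO_iff]
  intro ε hε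
  have hB' := hasFDerivAt_iff_isLittleO_nhds_zero.1 hB
  rw [Asymptotics.isLittleO_iff] at hB'
  have h1 : ∀ᶠ h in 𝓝 (0:E), ‖fderiv ℝ φ (z + h) - fderiv ℝ φ z - B h‖ ≤ ε * ‖h‖ := by
    simpa using hB' hε
  have h2 : ∀ᶠ h in 𝓝 (0:E), z + h ∈ U := by
    have hc : ContinuousAt (fun h : E => z + h) 0 := by fun_prop
    exact hc.eventually_mem (by simpa using hU.mem_nhds hz)
  obtain ⟨δ, hδpos, hδ⟩ := Metric.eventually_nhds_iff_ball.1 (h1.and h2)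
  filter_upwards [Metric.ball_mem_nhds (0:E) hδpos] with v hv
  set g : E → ℝ := fun w => φ (z + w) - φ z - L w - (1/2) * (B w w) with hgdef
  have hsub : closedBall (0:E) ‖v‖ ⊆ ball (0:E) δ := by
    intro u hu
    rw [mem_closedBall, dist_zero_right] at hu
    rw [mem_ball, dist_zero_right]
    exact lt_of_le_of_lt hu (by simpa [dist_zero_right] using hv)
  have hders : ∀ u ∈ closedBall (0:E) ‖v‖,
      HasFDerivWithinAt g (fderiv ℝ φ (z + u) - L - B u) (closedBall (0:E) ‖v‖) u := by
    intro u hu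
    have huU : z + u ∈ U := (hδ u (hsub hu)).2
    have hd1 : HasFDerivAt (fun w : E => φ (z + w)) (fderiv ℝ φ (z + u)) u := by
      have := (hdiff (z + u) huU).comp u ((hasFDerivAt_id u).const_add z)
      simpa [Function.comp_def] using this
    exact (((hd1.sub_const (φ z)).sub L.hasFDerivAt).sub (hq u)).hasFDerivWithinAt
  have hbound : ∀ u ∈ closedBall (0:E) ‖v‖, ‖fderiv ℝ φ (z + u) - L - B u‖ ≤ ε * ‖v‖ := by
    intro u hu
    have h3 := (hδ u (hsub hu)).1
    have h4 : ‖u‖ ≤ ‖v‖ := by simpa [dist_zero_right] using hu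
    calc ‖fderiv ℝ φ (z + u) - L - B u‖ ≤ ε * ‖u‖ := h3
      _ ≤ ε * ‖v‖ := mul_le_mul_of_nonneg_left h4 hε.le
  have hmvt := (convex_closedBall (0:E) ‖v‖).norm_image_sub_le_of_norm_hasFDerivWithin_le
    hders hbound (mem_closedBall_self (norm_nonneg v))
    (by rw [mem_closedBall, dist_zero_right])
  have hg0 : g 0 = 0 := by simp [hgdef]
  have : ‖g v‖ ≤ ε * ‖v‖ * ‖v‖ := by simpa [hg0] using hmvt
  calc ‖g v‖ ≤ ε * ‖v‖ * ‖v‖ := this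
    _ = ε * ‖‖v‖ ^ 2‖ := by
        rw [Real.norm_of_nonneg (by positivity)]; ring

/-- The point `r e^{iθ} • T`. -/
def circVec {n : ℕ} (T : EuclideanSpace ℂ (Fin n)) (r θ : ℝ) : EuclideanSpace ℂ (Fin n) :=
  ((r:ℂ) * Complex.exp ((θ:ℂ) * Complex.I)) • T

lemma circVec_eq {n : ℕ} (T : EuclideanSpace ℂ (Fin n)) (r θ : ℝ) :
    circVec T r θ = (r * Real.cos θ) • T + (r * Real.sin θ) • (Complex.I • T) := by
  have h1 : ((r:ℂ) * Complex.exp ((θ:ℂ) * Complex.I)) =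
      ((r * Real.cos θ : ℝ) : ℂ) + ((r * Real.sin θ : ℝ) : ℂ) * Complex.I := by
    rw [Complex.exp_mul_I, ← Complex.ofReal_cos, ← Complex.ofReal_sin]
    push_cast; ring
  rw [circVec, h1, add_smul, mul_smul, Complex.coe_smul, Complex.coe_smul]

lemma circVec_norm {n : ℕ} {T : EuclideanSpace ℂ (Fin n)} (hT : ‖T‖ = 1) {r : ℝ}
    (hr : 0 ≤ r) (θ : ℝ) : ‖circVec T r θ‖ = r := by
  rw [circVec]
  simp [norm_smul, map_mul, Complex.norm_real,
    Complex.norm_exp_ofReal_mul_I, hT, abs_of_nonneg hr]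

lemma circVec_continuous {n : ℕ} (T : EuclideanSpace ℂ (Fin n)) (r : ℝ) :
    Continuous fun θ : ℝ => circVec T r θ := by
  show Continuous fun θ : ℝ => ((r:ℂ) * Complex.exp ((θ:ℂ) * Complex.I)) • T
  apply Continuous.smul (f := fun θ : ℝ => (r:ℂ) * Complex.exp ((θ:ℂ) * Complex.I)) _ continuous_const
  exact continuous_const.mul (Complex.continuous_exp.comp
    (Complex.continuous_ofReal.mul continuous_const))


/-- For a `C²` function `φ`, a point `z` and a unit vector `T`, the limit as `r → 0⁺` of
`r⁻² [(1/2π)∫₀^{2π} φ(z + re^{iθ}T) dθ − φ(z)]` equals the complex Hessian quadratic form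
`Σ_{j,k} ∂²φ/∂z_j∂z̄_k(z) T_j T̄_k`. -/
theorem tendsto_circMean_cHess {n : ℕ} (U : Set (EuclideanSpace ℂ (Fin n)))
    (hU : IsOpen U) (z : EuclideanSpace ℂ (Fin n)) (hz : z ∈ U)
    (φ : EuclideanSpace ℂ (Fin n) → ℝ) (hφ : ContDiffOn ℝ 2 φ U)
    (T : EuclideanSpace ℂ (Fin n)) (hT : ‖T‖ = 1) :
    Tendsto (fun r : ℝ => r⁻¹ ^ 2 * (circMean φ z T r - φ z))
      (𝓝[>] (0:ℝ)) (𝓝 (cHess φ z T)) := by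
  set L := fderiv ℝ φ z with hLdef
  set B := fderiv ℝ (fderiv ℝ φ) z with hBdef
  set S : EuclideanSpace ℂ (Fin n) := Complex.I • T with hSdef
  set A : ℝ := B T T with hAdef
  set C : ℝ := B S S with hCdef
  have hS : ‖S‖ = 1 := by
    rw [hSdef, norm_smul, Complex.norm_I, one_mul, hT]
  set F : EuclideanSpace ℂ (Fin n) → ℝ := fun v => φ (z + v) - φ z - L v - (1/2) * (B v v) with hFdef
  have hFo : F =o[𝓝 (0:EuclideanSpace ℂ (Fin n))] (fun v => ‖v‖ ^ 2) := taylor2' hU hz hφ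
  have hexp : ∀ w : EuclideanSpace ℂ (Fin n), φ (z + w) = φ z + L w + (1/2) * (B w w) + F w := by
    intro w; rw [hFdef]; ring
  have hpt : ∀ r θ : ℝ, φ (z + circVec T r θ) =
      (φ z + (r * L T) * Real.cos θ + (r * L S) * Real.sin θ
        + ((1/2) * r^2 * A) * Real.cos θ ^ 2
        + ((1/2) * r^2 * (B T S + B S T)) * (Real.sin θ * Real.cos θ)
        + ((1/2) * r^2 * C) * Real.sin θ ^ 2) + F (circVec T r θ) := by
    intro r θ
    rw [hexp (circVec T r θ)]
    have hLv : L (circVec T r θ) = (r * Real.cos θ) * L T + (r * Real.sin θ) * L S := by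
      rw [circVec_eq, ← hSdef]; simp [map_add, _root_.map_smul, smul_eq_mul]
    have hBv : B (circVec T r θ) (circVec T r θ) = (r * Real.cos θ)^2 * A
        + (r * Real.cos θ) * (r * Real.sin θ) * (B T S + B S T)
        + (r * Real.sin θ)^2 * C := by
      rw [circVec_eq, ← hSdef]
      simp only [map_add, _root_.map_smul, ContinuousLinearMap.add_apply,
        ContinuousLinearMap.smul_apply, smul_eq_mul, hAdef, hCdef]
      ring
    rw [hLv, hBv]; ring
  obtain ⟨δ, hδpos, hδU⟩ := Metric.isOpen_iff.1 hU z hz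
  have hmem : ∀ r θ : ℝ, 0 < r → r < δ → z + circVec T r θ ∈ U := by
    intro r θ hr hrδ
    apply hδU
    rw [mem_ball, dist_eq_norm, add_sub_cancel_left, circVec_norm hT hr.le]
    exact hrδ
  have key : ∀ r : ℝ, 0 < r → r < δ → circMean φ z T r
      = φ z + r^2 * ((1/4) * (A + C))
        + (1/(2*π)) * ∫ θ in (0:ℝ)..(2*π), F (circVec T r θ) := by
    intro r hr0 hrδ
    have hvc := circVec_continuous T r
    have hφc : Continuous fun θ : ℝ => φ (z + circVec T r θ) := by
      have := hφ.continuousOn.comp_continuous (continuous_const.add hvc)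
        (fun θ => hmem r θ hr0 hrδ)
      simpa [Function.comp_def] using this
    have hFc : Continuous fun θ : ℝ => F (circVec T r θ) := by
      rw [hFdef]
      exact ((hφc.sub continuous_const).sub (L.continuous.comp hvc)).sub
        (continuous_const.mul ((B.continuous.comp hvc).clm_apply hvc))
    have hFint : IntervalIntegrable (fun θ => F (circVec T r θ)) volume 0 (2*π) :=
      hFc.intervalIntegrable _ _
    have hcm : circMean φ z T r
        = (1/(2*π)) * ∫ θ in (0:ℝ)..(2*π), φ (z + circVec T r θ) := rfl
    rw [hcm, intervalIntegral.integral_congr (g := fun θ =>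
      (φ z + (r * L T) * Real.cos θ + (r * L S) * Real.sin θ
        + ((1/2) * r^2 * A) * Real.cos θ ^ 2
        + ((1/2) * r^2 * (B T S + B S T)) * (Real.sin θ * Real.cos θ)
        + ((1/2) * r^2 * C) * Real.sin θ ^ 2) + F (circVec T r θ))
      (fun θ _ => hpt r θ)]
    have hc1 : Continuous fun θ : ℝ => φ z + (r * L T) * Real.cos θ := by fun_prop
    have hc2 : Continuous fun θ : ℝ => φ z + (r * L T) * Real.cos θ
        + (r * L S) * Real.sin θ := by fun_prop
    have hc3 : Continuous fun θ : ℝ => φ z + (r * L T) * Real.cos θ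
        + (r * L S) * Real.sin θ + ((1/2) * r^2 * A) * Real.cos θ ^ 2 := by fun_prop
    have hc4 : Continuous fun θ : ℝ => φ z + (r * L T) * Real.cos θ
        + (r * L S) * Real.sin θ + ((1/2) * r^2 * A) * Real.cos θ ^ 2
        + ((1/2) * r^2 * (B T S + B S T)) * (Real.sin θ * Real.cos θ) := by fun_prop
    have hc5 : Continuous fun θ : ℝ => φ z + (r * L T) * Real.cos θ
        + (r * L S) * Real.sin θ + ((1/2) * r^2 * A) * Real.cos θ ^ 2
        + ((1/2) * r^2 * (B T S + B S T)) * (Real.sin θ * Real.cos θ)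
        + ((1/2) * r^2 * C) * Real.sin θ ^ 2 := by fun_prop
    rw [intervalIntegral.integral_add (hc5.intervalIntegrable _ _) hFint,
      intervalIntegral.integral_add (hc4.intervalIntegrable _ _)
        ((by fun_prop : Continuous fun θ : ℝ => ((1/2) * r^2 * C) * Real.sin θ ^ 2).intervalIntegrable _ _),
      intervalIntegral.integral_add (hc3.intervalIntegrable _ _)
        ((by fun_prop : Continuous fun θ : ℝ => ((1/2) * r^2 * (B T S + B S T)) * (Real.sin θ * Real.cos θ)).intervalIntegrable _ _),
      intervalIntegral.integral_add (hc2.intervalIntegrable _ _)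
        ((by fun_prop : Continuous fun θ : ℝ => ((1/2) * r^2 * A) * Real.cos θ ^ 2).intervalIntegrable _ _),
      intervalIntegral.integral_add (hc1.intervalIntegrable _ _)
        ((by fun_prop : Continuous fun θ : ℝ => (r * L S) * Real.sin θ).intervalIntegrable _ _),
      intervalIntegral.integral_add intervalIntegrable_const
        ((by fun_prop : Continuous fun θ : ℝ => (r * L T) * Real.cos θ).intervalIntegrable _ _)]
    rw [intervalIntegral.integral_const, intervalIntegral.integral_const_mul,
      intervalIntegral.integral_const_mul, intervalIntegral.integral_const_mul,
      intervalIntegral.integral_const_mul, intervalIntegral.integral_const_mul,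
      integral_cos, integral_sin, integral_cos_sq, integral_sin_mul_cos₁, integral_sin_sq]
    have hπ : (π : ℝ) ≠ 0 := Real.pi_ne_zero
    simp only [Real.sin_two_pi, Real.cos_two_pi, Real.sin_zero, Real.cos_zero, smul_eq_mul]
    field_simp
    try ring
  have hcHess : cHess φ z T = (1/4) * (A + C) := by
    simp only [cHess, iteratedFDeriv_two_apply]
    simp only [Matrix.cons_val_zero, Matrix.cons_val_one, Matrix.head_cons]
    try rw [hAdef, hCdef, hBdef, hSdef]
  have heq : ∀ᶠ r in 𝓝[>] (0:ℝ), (1/4) * (A + C)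
      + r⁻¹ ^ 2 * ((1/(2*π)) * ∫ θ in (0:ℝ)..(2*π), F (circVec T r θ))
      = r⁻¹ ^ 2 * (circMean φ z T r - φ z) := by
    filter_upwards [Ioo_mem_nhdsGT_of_mem (show (0:ℝ) ∈ Ico 0 δ from ⟨le_rfl, hδpos⟩)]
      with r hr
    rw [key r hr.1 hr.2]
    have hrne : r ≠ 0 := hr.1.ne'
    field_simp
    try ring
  have hzero : Tendsto (fun r : ℝ =>
      r⁻¹ ^ 2 * ((1/(2*π)) * ∫ θ in (0:ℝ)..(2*π), F (circVec T r θ)))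
      (𝓝[>] (0:ℝ)) (𝓝 0) := by
    rw [NormedAddCommGroup.tendsto_nhds_zero]
    intro ε hε
    have hhalf : (0:ℝ) < ε/2 := by positivity
    obtain ⟨δ', hδ'pos, hδ'⟩ := Metric.eventually_nhds_iff.1 (hFo.def hhalf)
    filter_upwards [Ioo_mem_nhdsGT_of_mem
      (show (0:ℝ) ∈ Ico 0 (min δ δ') from ⟨le_rfl, lt_min hδpos hδ'pos⟩)] with r hr
    have hr0 : 0 < r := hr.1
    have hrδ' : r < δ' := lt_of_lt_of_le hr.2 (min_le_right _ _)
    have hbd : ∀ θ ∈ Set.uIoc (0:ℝ) (2*π), ‖F (circVec T r θ)‖ ≤ (ε/2) * r^2 := by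
      intro θ _
      have h2 : ‖F (circVec T r θ)‖ ≤ ε/2 * ‖‖circVec T r θ‖ ^ 2‖ := by
        apply hδ'
        rw [dist_zero_right, circVec_norm hT hr0.le]
        exact hrδ'
      rw [circVec_norm hT hr0.le] at h2
      have h3 : ‖(r^2 : ℝ)‖ = r^2 := Real.norm_of_nonneg (by positivity)
      rwa [h3] at h2
    have hIbd : ‖∫ θ in (0:ℝ)..(2*π), F (circVec T r θ)‖ ≤ (ε/2) * r^2 * |2*π - 0| :=
      intervalIntegral.norm_integral_le_of_norm_le_const hbd
    have hπ := Real.pi_pos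
    calc ‖r⁻¹ ^ 2 * ((1/(2*π)) * ∫ θ in (0:ℝ)..(2*π), F (circVec T r θ))‖
        = r⁻¹ ^ 2 * ((1/(2*π)) * ‖∫ θ in (0:ℝ)..(2*π), F (circVec T r θ)‖) := by
          rw [norm_mul, norm_mul]
          rw [Real.norm_of_nonneg (by positivity), Real.norm_of_nonneg (by positivity)]
      _ ≤ r⁻¹ ^ 2 * ((1/(2*π)) * ((ε/2) * r^2 * |2*π - 0|)) := by gcongr
      _ = ε/2 := by
          rw [sub_zero, abs_of_pos (by positivity)]
          field_simp
          try ring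
      _ < ε := by linarith
  have hfinal := hzero.const_add ((1/4) * (A + C))
  rw [add_zero] at hfinal
  rw [hcHess]
  exact hfinal.congr' heq
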